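/- Suppose for each k ∈ [n] we have facility sets F*_k with |F*_k| ≤ s·k and cost(F*_k) ≤ opt_k, and B ⊆ [n] is a β-competitive bid set for universe [n] (for every T ∈ [n], the sum of all b ∈ B with b ≤ min{b' ∈ B : b' ≥ T} is at most βT, and max B = n). Define F_k = ⋃_{b ∈ B, b ≤ k⁺} F*_b where k⁺ = min{b ∈ B : b ≥ k}. Then (F_k) is a nested sequence with cost(F_k) ≤ opt_k and |F_k| ≤ s·β·k for all k. -/
import Mathlib


open scoped ENNReal

/-- Cost of a facility set `F`: each customer `u ∈ C` pays its distance to the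
nearest facility in `F` (`⊤` if `F` is empty). -/
noncomputable def cost14 {α γ : Type*} (C : Finset γ) (d : γ → α → ℝ≥0∞)
    (F : Finset α) : ℝ≥0∞ :=
  ∑ u ∈ C, ⨅ f ∈ F, d u f

/-- `opt k`: the minimum cost of any facility set of size at most `k`. -/
noncomputable def opt14 {α γ : Type*} (C : Finset γ) (d : γ → α → ℝ≥0∞)
    (k : ℕ) : ℝ≥0∞ :=
  ⨅ (F : Finset α) (_ : F.card ≤ k), cost14 C d F

/-- Against threshold `T`, bid set `B` pays all bids `b ∈ B` with
`b ≤ min {b' ∈ B : b' ≥ T}`. -/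
def pay14 (B : Finset ℕ) (T : ℕ) : ℕ :=
  ∑ b ∈ B.filter (fun b => ∀ b' ∈ B, T ≤ b' → b ≤ b'), b

/-- Reduction from size-competitive oblivious medians to online bidding: given
`s`-size-approximate offline solutions `F* k` (of size at most `s k` and cost at
most `opt k`) and a `β`-competitive bid set `B ⊆ [n]` with `n ∈ B`, the sets
`F k = ⋃ {F* b : b ∈ B, b ≤ k⁺}` (where `k⁺ = min {b ∈ B : b ≥ k}`) form a
nested sequence with `cost (F k) ≤ opt k` and `|F k| ≤ s β k`. -/
theorem stmt14 {α γ : Type*} [DecidableEq α] (C : Finset γ) (d : γ → α → ℝ≥0∞)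
    (n : ℕ) (hn : 1 ≤ n) (s βr : ℝ) (hs : 0 ≤ s)
    (Fstar : ℕ → Finset α)
    (hsize : ∀ k ∈ Finset.Icc 1 n, ((Fstar k).card : ℝ) ≤ s * k)
    (hcost : ∀ k ∈ Finset.Icc 1 n, cost14 C d (Fstar k) ≤ opt14 C d k)
    (B : Finset ℕ) (hBsub : B ⊆ Finset.Icc 1 n) (hnB : n ∈ B)
    (hβ : ∀ T ∈ Finset.Icc 1 n, ((pay14 B T : ℕ) : ℝ) ≤ βr * T)
    (F : ℕ → Finset α)
    (hF : ∀ k, F k = (B.filter (fun b => ∀ b' ∈ B, k ≤ b' → b ≤ b')).biUnion Fstar) :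
    ∀ k ∈ Finset.Icc 1 n,
      (∀ l ∈ Finset.Icc 1 n, k ≤ l → F k ⊆ F l) ∧
      cost14 C d (F k) ≤ opt14 C d k ∧
      ((F k).card : ℝ) ≤ s * βr * k := by
  have costmono : ∀ (F₁ F₂ : Finset α), F₁ ⊆ F₂ → cost14 C d F₂ ≤ cost14 C d F₁ := by
    intro F₁ F₂ h
    refine Finset.sum_le_sum fun u _ => ?_
    exact le_iInf₂ fun f hf => iInf₂_le f (h hf)
  have optmono : ∀ k m : ℕ, k ≤ m → opt14 C d m ≤ opt14 C d k :=
    fun k m hkm => iInf_mono fun Fs => iInf_const_mono fun h => h.trans hkm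
  intro k hk
  have hk' := Finset.mem_Icc.1 hk
  refine ⟨?_, ?_, ?_⟩
  · intro l hl hkl
    rw [hF, hF]
    apply Finset.biUnion_subset_biUnion_of_subset_left
    intro b hb
    simp only [Finset.mem_filter] at hb ⊢
    exact ⟨hb.1, fun b' hb' hlb' => hb.2 b' hb' (hkl.trans hlb')⟩
  · have hnS : n ∈ B.filter (fun b => k ≤ b) := Finset.mem_filter.2 ⟨hnB, hk'.2⟩
    set kp := (B.filter (fun b => k ≤ b)).min' ⟨n, hnS⟩ with hkpdef
    have hkpmem := Finset.min'_mem (B.filter (fun b => k ≤ b)) ⟨n, hnS⟩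
    have hkpB : kp ∈ B := (Finset.mem_filter.1 hkpmem).1
    have hkkp : k ≤ kp := (Finset.mem_filter.1 hkpmem).2
    have hkpfilt : kp ∈ B.filter (fun b => ∀ b' ∈ B, k ≤ b' → b ≤ b') :=
      Finset.mem_filter.2 ⟨hkpB, fun b' hb' hkb' =>
        Finset.min'_le _ _ (Finset.mem_filter.2 ⟨hb', hkb'⟩)⟩
    have h1 : Fstar kp ⊆ F k := by
      rw [hF]; exact Finset.subset_biUnion_of_mem Fstar hkpfilt
    calc cost14 C d (F k) ≤ cost14 C d (Fstar kp) := costmono _ _ h1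
      _ ≤ opt14 C d kp := hcost kp (hBsub hkpB)
      _ ≤ opt14 C d k := optmono _ _ hkkp
  · rw [hF]
    calc (((B.filter (fun b => ∀ b' ∈ B, k ≤ b' → b ≤ b')).biUnion Fstar).card : ℝ)
        ≤ ((∑ b ∈ B.filter (fun b => ∀ b' ∈ B, k ≤ b' → b ≤ b'), (Fstar b).card : ℕ) : ℝ) := by
          exact_mod_cast Finset.card_biUnion_le
      _ = ∑ b ∈ B.filter (fun b => ∀ b' ∈ B, k ≤ b' → b ≤ b'), ((Fstar b).card : ℝ) := by
          push_cast; ring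
      _ ≤ ∑ b ∈ B.filter (fun b => ∀ b' ∈ B, k ≤ b' → b ≤ b'), s * b :=
          Finset.sum_le_sum fun b hb => hsize b (hBsub (Finset.mem_filter.1 hb).1)
      _ = s * ((pay14 B k : ℕ) : ℝ) := by rw [pay14]; push_cast; rw [Finset.mul_sum]
      _ ≤ s * (βr * k) := mul_le_mul_of_nonneg_left (hβ k hk) hs
      _ = s * βr * k := by ring
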